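/- Let M be a polyform extending module. Then M is H-supplemented if and only if every direct summand of M is H-supplemented. -/

import Mathlib

universe u v

/-- `N` is a small (superfluous) submodule of `M`. -/
def SmallSub (R : Type v) [Ring R] {M : Type u} [AddCommGroup M] [Module R M]
    (N : Submodule R M) : Prop :=
  ∀ X : Submodule R M, N ⊔ X = ⊤ → X = ⊤

/-- `D` is a direct summand of `M`. -/
def IsDirectSummand (R : Type v) [Ring R] {M : Type u} [AddCommGroup M] [Module R M]
    (D : Submodule R M) : Prop :=
  ∃ D' : Submodule R M, IsCompl D D'

/-- `M` is H-supplemented: for every submodule `X` there is a direct summand `D`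
with `(X+D)/D ≪ M/D` and `(X+D)/X ≪ M/X`. -/
def HSupplemented (R : Type v) [Ring R] (M : Type u) [AddCommGroup M] [Module R M] : Prop :=
  ∀ X : Submodule R M, ∃ D : Submodule R M, IsDirectSummand R D ∧
    SmallSub R ((X ⊔ D).map D.mkQ) ∧ SmallSub R ((X ⊔ D).map X.mkQ)

/-- Condition (D3). -/
def CondD3 (R : Type v) [Ring R] (M : Type u) [AddCommGroup M] [Module R M] : Prop :=
  ∀ K L : Submodule R M, IsDirectSummand R K → IsDirectSummand R L → K ⊔ L = ⊤ →
    IsDirectSummand R (K ⊓ L)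

/-- `N` is essential in the submodule `C` (both submodules of `M`, `N ≤ C`). -/
def EssIn (R : Type v) [Ring R] {M : Type u} [AddCommGroup M] [Module R M]
    (N C : Submodule R M) : Prop :=
  N ≤ C ∧ ∀ X : Submodule R M, X ≤ C → N ⊓ X = ⊥ → X = ⊥

/-- `C` is a closed submodule of `M`: it has no proper essential extension in `M`. -/
def ClosedSub (R : Type v) [Ring R] {M : Type u} [AddCommGroup M] [Module R M]
    (C : Submodule R M) : Prop :=
  ∀ X : Submodule R M, EssIn R C X → X = C

/-- `C` is a closure of `N` in `M`. -/
def IsClosure (R : Type v) [Ring R] {M : Type u} [AddCommGroup M] [Module R M]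
    (N C : Submodule R M) : Prop :=
  EssIn R N C ∧ ClosedSub R C

/-- `M` is a UC module: every submodule has a unique closure. -/
def UCModule (R : Type v) [Ring R] (M : Type u) [AddCommGroup M] [Module R M] : Prop :=
  ∀ N : Submodule R M, ∃! C : Submodule R M, IsClosure R N C

/-- `M` is extending: every submodule is essential in a direct summand. -/
def Extending (R : Type v) [Ring R] (M : Type u) [AddCommGroup M] [Module R M] : Prop :=
  ∀ N : Submodule R M, ∃ D : Submodule R M, IsDirectSummand R D ∧ EssIn R N D

/-- `N` is an essential submodule of `M`. -/
def EssentialSub (R : Type v) [Ring R] {M : Type u} [AddCommGroup M] [Module R M]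
    (N : Submodule R M) : Prop :=
  ∀ X : Submodule R M, N ⊓ X = ⊥ → X = ⊥

/-- `N` is a rational (dense) submodule of `M`. -/
def RationalSub (R : Type v) [Ring R] {M : Type u} [AddCommGroup M] [Module R M]
    (N : Submodule R M) : Prop :=
  ∀ X : Submodule R M, N ≤ X → ∀ f : ↥X →ₗ[R] M, (∀ x : ↥X, (x : M) ∈ N → f x = 0) → f = 0

/-- `M` is polyform: every essential submodule is rational. -/
def Polyform (R : Type v) [Ring R] (M : Type u) [AddCommGroup M] [Module R M] : Prop :=
  ∀ N : Submodule R M, EssentialSub R N → RationalSub R N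

section Aux

variable {R : Type v} [Ring R] {M : Type u} [AddCommGroup M] [Module R M]

lemma smallSub_quot_iff (A B : Submodule R M) :
    SmallSub R ((A ⊔ B).map B.mkQ) ↔ ∀ Y : Submodule R M, B ≤ Y → A ⊔ Y = ⊤ → Y = ⊤ := by
  constructor
  · intro hs Y hBY hAY
    have hsum : (A ⊔ B) ⊔ Y = ⊤ := by rw [sup_assoc, sup_eq_right.mpr hBY, hAY]
    have h1 : (A ⊔ B).map B.mkQ ⊔ Y.map B.mkQ = ⊤ := by
      rw [← Submodule.map_sup, hsum, Submodule.map_top, Submodule.range_mkQ]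
    have h2 := hs _ h1
    have h3 := congrArg (Submodule.comap B.mkQ) h2
    rw [Submodule.comap_map_mkQ, Submodule.comap_top] at h3
    rwa [sup_eq_right.mpr hBY] at h3
  · intro h X' hX'
    set Y := Submodule.comap B.mkQ X' with hY
    have hBY : B ≤ Y := by
      have := Submodule.comap_mono (f := B.mkQ) (bot_le : (⊥ : Submodule R (M ⧸ B)) ≤ X')
      rwa [Submodule.comap_bot, Submodule.ker_mkQ] at this
    have hmap : Y.map B.mkQ = X' := by
      rw [hY, Submodule.map_comap_eq, Submodule.range_mkQ, top_inf_eq]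
    rw [← hmap, ← Submodule.map_sup] at hX'
    have h3 := congrArg (Submodule.comap B.mkQ) hX'
    rw [Submodule.comap_map_mkQ, Submodule.comap_top] at h3
    have hcollapse : B ⊔ (A ⊔ B ⊔ Y) = A ⊔ Y := by
      rw [sup_assoc A B Y, sup_eq_right.mpr hBY, sup_comm B (A ⊔ Y), sup_assoc A Y B,
        sup_eq_left.mpr hBY]
    rw [hcollapse] at h3
    have hYtop : Y = ⊤ := h Y hBY h3
    rw [← hmap, hYtop, Submodule.map_top, Submodule.range_mkQ]

lemma hsup_iff : HSupplemented R M ↔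
    ∀ X : Submodule R M, ∃ D : Submodule R M, IsDirectSummand R D ∧
      ∀ T : Submodule R M, (X ⊔ T = ⊤ ↔ D ⊔ T = ⊤) := by
  constructor
  · intro h X
    obtain ⟨D, hD, h1, h2⟩ := h X
    rw [smallSub_quot_iff X D] at h1
    rw [sup_comm X D, smallSub_quot_iff D X] at h2
    refine ⟨D, hD, fun T => ⟨fun hXT => ?_, fun hDT => ?_⟩⟩
    · have hY : X ⊔ (D ⊔ T) = ⊤ :=
        eq_top_iff.mpr (by rw [← hXT]; exact sup_le_sup_left le_sup_right X)
      exact h1 (D ⊔ T) le_sup_left hY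
    · have hY : D ⊔ (X ⊔ T) = ⊤ :=
        eq_top_iff.mpr (by rw [← hDT]; exact sup_le_sup_left le_sup_right D)
      exact h2 (X ⊔ T) le_sup_left hY
  · intro h X
    obtain ⟨D, hD, hiff⟩ := h X
    refine ⟨D, hD, (smallSub_quot_iff X D).mpr ?_, ?_⟩
    · intro Y hDY hXY
      have := (hiff Y).mp hXY
      rwa [sup_eq_right.mpr hDY] at this
    · rw [sup_comm X D, smallSub_quot_iff D X]
      intro Y hXY hDY
      have := (hiff Y).mpr hDY
      rwa [sup_eq_right.mpr hXY] at this

lemma essSub_sup_of_essIn {A C C' : Submodule R M} (hAC : EssIn R A C) (h : IsCompl C C') :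
    EssentialSub R (A ⊔ C') := by
  intro U hU
  set p := C.linearProjOfIsCompl C' h with hp
  set V := U.map (C.subtype.comp p) with hV
  have hVC : V ≤ C := by
    rintro x ⟨u, hu, rfl⟩
    exact (p u).2
  have hAV : A ⊓ V = ⊥ := by
    rw [eq_bot_iff]
    rintro x ⟨hxA, hxV⟩
    obtain ⟨u, hu, hx⟩ := hxV
    have hker : u - ((p u : C) : M) ∈ C' := by
      have hz : p (u - ((p u : C) : M)) = 0 := by
        rw [map_sub]
        exact sub_eq_zero.mpr (Submodule.linearProjOfIsCompl_apply_left h (p u)).symm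
      have := Submodule.linearProjOfIsCompl_ker h (p := C) (q := C')
      rw [← this]
      exact LinearMap.mem_ker.mpr hz
    have hxval : ((p u : C) : M) = x := hx
    have huMem : u ∈ A ⊔ C' := by
      have : u = x + (u - x) := by abel
      rw [this]
      exact Submodule.add_mem_sup hxA (by rw [← hxval]; exact hker)
    have : u ∈ (A ⊔ C') ⊓ U := ⟨huMem, hu⟩
    rw [hU] at this
    have hu0 : u = 0 := this
    rw [← hxval, hu0, map_zero]
    simp
  have hVbot : V = ⊥ := hAC.2 V hVC hAV
  have hUC' : U ≤ C' := by
    intro u hu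
    have hmem : (C.subtype.comp p) u ∈ V := Submodule.mem_map_of_mem hu
    rw [hVbot] at hmem
    have : ((p u : C) : M) = 0 := hmem
    have hp0 : p u = 0 := Subtype.ext this
    have := Submodule.linearProjOfIsCompl_ker h (p := C) (q := C')
    rw [← this]
    exact LinearMap.mem_ker.mpr hp0
  have : U ≤ (A ⊔ C') ⊓ U := le_inf (hUC'.trans le_sup_right) le_rfl
  rw [hU] at this
  exact le_bot_iff.mp this

lemma le_summand_of_polyform (hpoly : Polyform R M) {A C C' K K' : Submodule R M}
    (hAK : A ≤ K) (hAC : EssIn R A C) (hC : IsCompl C C') (hK : IsCompl K K') : C ≤ K := by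
  set pC := C.linearProjOfIsCompl C' hC with hpC
  set pK := K.linearProjOfIsCompl K' hK with hpK
  set f : M →ₗ[R] M :=
    C.subtype.comp pC - K.subtype.comp (pK.comp (C.subtype.comp pC)) with hf
  have hfapp : ∀ x : M, f x = ((pC x : C) : M) - ((pK ((pC x : C) : M) : K) : M) := fun _ => rfl
  have hN : EssentialSub R (A ⊔ C') := essSub_sup_of_essIn hAC hC
  have hzero : ∀ x ∈ A ⊔ C', f x = 0 := by
    intro x hx
    obtain ⟨a, ha, c', hc', rfl⟩ := Submodule.mem_sup.mp hx
    have h1 : pC a = ⟨a, hAC.1 ha⟩ := Submodule.linearProjOfIsCompl_apply_left hC ⟨a, hAC.1 ha⟩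
    have h2 : pK a = ⟨a, hAK ha⟩ := Submodule.linearProjOfIsCompl_apply_left hK ⟨a, hAK ha⟩
    have hfa : f a = 0 := by
      rw [hfapp, h1]
      simp only [Submodule.coe_mk]
      rw [h2]
      simp
    have h3 : pC c' = 0 := Submodule.linearProjOfIsCompl_apply_right hC ⟨c', hc'⟩
    have hfc : f c' = 0 := by
      rw [hfapp, h3]
      simp
    rw [map_add, hfa, hfc, add_zero]
  have hrat := hpoly (A ⊔ C') hN
  have h0 : f.comp (Submodule.subtype ⊤) = 0 :=
    hrat ⊤ le_top (f.comp (Submodule.subtype ⊤)) (fun x hx => hzero x hx)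
  have hf0 : ∀ m : M, f m = 0 := fun m => LinearMap.congr_fun h0 ⟨m, Submodule.mem_top⟩
  intro x hx
  have h1 : pC x = ⟨x, hx⟩ := Submodule.linearProjOfIsCompl_apply_left hC ⟨x, hx⟩
  have := hf0 x
  rw [hfapp, h1] at this
  simp only [Submodule.coe_mk] at this
  have hxk : x = ((pK x : K) : M) := by
    have := sub_eq_zero.mp this
    exact this
  rw [hxk]
  exact (pK x).2

lemma sip (hpoly : Polyform R M) (hext : Extending R M) {K L : Submodule R M}
    (hK : IsDirectSummand R K) (hL : IsDirectSummand R L) : IsDirectSummand R (K ⊓ L) := by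
  obtain ⟨C, ⟨C', hCC'⟩, hess⟩ := hext (K ⊓ L)
  obtain ⟨K', hKK'⟩ := hK
  obtain ⟨L', hLL'⟩ := hL
  have h1 : C ≤ K := le_summand_of_polyform hpoly inf_le_left hess hCC' hKK'
  have h2 : C ≤ L := le_summand_of_polyform hpoly inf_le_right hess hCC' hLL'
  have heq : K ⊓ L = C := le_antisymm hess.1 (le_inf h1 h2)
  rw [heq]
  exact ⟨C', hCC'⟩

lemma hsup_of_equiv {M₂ : Type u} [AddCommGroup M₂] [Module R M₂] (e : M ≃ₗ[R] M₂)
    (h : HSupplemented R M) : HSupplemented R M₂ := by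
  rw [hsup_iff] at h ⊢
  intro X
  set o := Submodule.orderIsoMapComap e with ho
  obtain ⟨D, ⟨D₀, hD₀⟩, hiff⟩ := h (o.symm X)
  have key : ∀ (A B : Submodule R M₂), (o.symm A ⊔ o.symm B = ⊤) ↔ (A ⊔ B = ⊤) := by
    intro A B
    rw [← OrderIso.map_sup]
    constructor
    · intro hh
      have := congrArg o hh
      rwa [o.apply_symm_apply, OrderIso.map_top] at this
    · intro hh
      rw [hh]
      exact o.symm.map_top
  refine ⟨o D, ⟨o D₀, ?_, ?_⟩, ?_⟩
  · rw [disjoint_iff, ← o.map_inf, disjoint_iff.mp hD₀.1, o.map_bot]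
  · rw [codisjoint_iff, ← o.map_sup, codisjoint_iff.mp hD₀.2, o.map_top]
  · intro T
    calc X ⊔ T = ⊤ ↔ o.symm X ⊔ o.symm T = ⊤ := (key X T).symm
      _ ↔ D ⊔ o.symm T = ⊤ := hiff (o.symm T)
      _ ↔ o.symm (o D) ⊔ o.symm T = ⊤ := by rw [o.symm_apply_apply]
      _ ↔ o D ⊔ T = ⊤ := key (o D) T

end Aux

theorem stmt5 {R : Type v} [Ring R] {M : Type u} [AddCommGroup M] [Module R M]
    (hpoly : Polyform R M) (hext : Extending R M) :
    HSupplemented R M ↔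
      ∀ D : Submodule R M, IsDirectSummand R D → HSupplemented R ↥D := by
  constructor
  · intro hH D hD
    obtain ⟨D', hDD'⟩ := hD
    rw [hsup_iff] at hH
    rw [hsup_iff]
    intro X'
    have sInj : Function.Injective D.subtype := D.injective_subtype
    set X := X'.map D.subtype with hXdef
    have hXD : X ≤ D := Submodule.map_subtype_le D X'
    obtain ⟨E, hEsummand, hEiff⟩ := hH (X ⊔ D')
    have hsupXD : X ⊔ D' ⊔ D = ⊤ := by
      rw [sup_assoc, sup_comm D' D, codisjoint_iff.mp hDD'.2, sup_top_eq]
    have hED : E ⊔ D = ⊤ := (hEiff D).mp hsupXD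
    have hFsummand : IsDirectSummand R (E ⊓ D) := sip hpoly hext hEsummand ⟨D', hDD'⟩
    set F := E ⊓ D with hFdef
    have hFD : F ≤ D := inf_le_right
    have hFE : F ≤ E := inf_le_left
    have key : ∀ T : Submodule R M, T ≤ D → ((X ⊔ T = D) ↔ (F ⊔ T = D)) := by
      intro T hTD
      have h1 : (X ⊔ T = D) ↔ (X ⊔ D' ⊔ T = ⊤) := by
        constructor
        · intro hh
          rw [sup_right_comm, hh, codisjoint_iff.mp hDD'.2]
        · intro hh
          have hXT : X ⊔ T ≤ D := sup_le hXD hTD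
          have e2 : D' ⊓ D = ⊥ := disjoint_iff.mp hDD'.1.symm
          calc X ⊔ T = X ⊔ T ⊔ ⊥ := (sup_bot_eq _).symm
            _ = X ⊔ T ⊔ D' ⊓ D := by rw [e2]
            _ = (X ⊔ T ⊔ D') ⊓ D := (sup_inf_assoc_of_le D' hXT).symm
            _ = ⊤ ⊓ D := by rw [sup_right_comm, hh]
            _ = D := top_inf_eq D
      have h2 : (F ⊔ T = D) ↔ (E ⊔ T = ⊤) := by
        constructor
        · intro hh
          calc E ⊔ T = E ⊔ (F ⊔ T) := by rw [← sup_assoc, sup_eq_left.mpr hFE]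
            _ = E ⊔ D := by rw [hh]
            _ = ⊤ := hED
        · intro hh
          calc F ⊔ T = T ⊔ E ⊓ D := by rw [sup_comm]
            _ = (T ⊔ E) ⊓ D := (sup_inf_assoc_of_le E hTD).symm
            _ = ⊤ ⊓ D := by rw [sup_comm T E, hh]
            _ = D := top_inf_eq D
      rw [h1, hEiff T, ← h2]
    obtain ⟨F', hFF'⟩ := hFsummand
    refine ⟨F.comap D.subtype, ⟨(F' ⊓ D).comap D.subtype, ?_, ?_⟩, ?_⟩
    · rw [disjoint_iff, ← Submodule.comap_inf]
      have hb : F ⊓ (F' ⊓ D) = ⊥ := by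
        rw [← inf_assoc, disjoint_iff.mp hFF'.1, bot_inf_eq]
      rw [hb, Submodule.comap_bot, Submodule.ker_subtype]
    · rw [codisjoint_iff]
      apply Submodule.map_injective_of_injective sInj
      rw [Submodule.map_sup, Submodule.map_comap_subtype, Submodule.map_comap_subtype,
        Submodule.map_top, Submodule.range_subtype, inf_eq_right.mpr hFD,
        inf_eq_right.mpr inf_le_right, ← sup_inf_assoc_of_le F' hFD,
        codisjoint_iff.mp hFF'.2, top_inf_eq]
    · intro T'
      have hmapT : T'.map D.subtype ≤ D := Submodule.map_subtype_le D T'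
      have lhs : (X' ⊔ T' = ⊤) ↔ (X ⊔ T'.map D.subtype = D) := by
        constructor
        · intro hh
          have := congrArg (Submodule.map D.subtype) hh
          rwa [Submodule.map_sup, Submodule.map_top, Submodule.range_subtype] at this
        · intro hh
          apply Submodule.map_injective_of_injective sInj
          rwa [Submodule.map_sup, Submodule.map_top, Submodule.range_subtype]
      have rhs : (F.comap D.subtype ⊔ T' = ⊤) ↔ (F ⊔ T'.map D.subtype = D) := by
        constructor
        · intro hh
          have := congrArg (Submodule.map D.subtype) hh
          rwa [Submodule.map_sup, Submodule.map_comap_subtype, inf_eq_right.mpr hFD,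
            Submodule.map_top, Submodule.range_subtype] at this
        · intro hh
          apply Submodule.map_injective_of_injective sInj
          rwa [Submodule.map_sup, Submodule.map_comap_subtype, inf_eq_right.mpr hFD,
            Submodule.map_top, Submodule.range_subtype]
      rw [lhs, rhs]
      exact key _ hmapT
  · intro h
    exact hsup_of_equiv (Submodule.topEquiv) (h ⊤ ⟨⊥, isCompl_top_bot⟩)
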